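/- Let s₁, s₂, s₁₂, p₁, p₂ be real numbers. Then the complex-valued function t ↦ (1-t)^{-1/2 - i s₁₂ + i p₁ + i p₂} · t^{-i p₂ + i s₂ - 1/2} · ₂F₁(1/2-i s₁₂+i s₁+i s₂, 1/2-i s₁₂-i s₁+i s₂; 1+2i s₂; t) is integrable with respect to Lebesgue measure on (0,1/2), and the function t ↦ (1-t)^{i s₁₂ - 1/2 + i p₁ + i p₂} · t^{-i p₂ + i s₂ - 1/2} · ₂F₁(1/2+i s₁₂-i s₁+i s₂, 1/2+i s₁₂+i s₁+i s₂; 1+2i s₁₂; 1-t) is integrable with respect to Lebesgue measure on (1/2,1). (Convergence of the two pieces of the integral I₂(C,C,C) for the coupling of two continuous series to a continuous series.) -/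

import Mathlib

open Complex Filter Set MeasureTheory

/-- The `n`-th term of the Gauss hypergeometric series `₂F₁(a,b;c;z)`. -/
noncomputable def hypTerm (a b c z : ℂ) (n : ℕ) : ℂ :=
  (ascPochhammer ℂ n).eval a * (ascPochhammer ℂ n).eval b /
    ((ascPochhammer ℂ n).eval c * (n.factorial : ℂ)) * z ^ n

/-- The Gauss hypergeometric function `₂F₁(a,b;c;z)`. -/
noncomputable def hyp (a b c z : ℂ) : ℂ := ∑' n, hypTerm a b c z n

noncomputable def hypCoeff (a b c : ℂ) (n : ℕ) : ℂ :=
  (ascPochhammer ℂ n).eval a * (ascPochhammer ℂ n).eval b /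
    ((ascPochhammer ℂ n).eval c * (n.factorial : ℂ))

lemma cn_ne_zero {c : ℂ} (hc : 0 < c.re) (n : ℕ) : c + (n:ℂ) ≠ 0 := by
  intro h
  have h' : (c + (n:ℂ)).re = 0 := by rw [h]; simp
  rw [Complex.add_re, Complex.natCast_re] at h'
  have : (0:ℝ) ≤ (n:ℝ) := n.cast_nonneg
  linarith

lemma ratio_tendsto (a b : ℂ) {c : ℂ} (hc : 0 < c.re) :
    Tendsto (fun n : ℕ => ‖(a + n) * (b + n) / ((c + n) * ((n:ℂ)+1))‖) atTop (nhds 1) := by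
  have hinv : Tendsto (fun n : ℕ => ((n:ℂ)+1)⁻¹) atTop (nhds 0) := by
    have hre : Tendsto (fun n : ℕ => ((n:ℝ)+1)⁻¹) atTop (nhds 0) :=
      tendsto_inv_atTop_zero.comp (tendsto_atTop_add_const_right atTop 1 tendsto_natCast_atTop_atTop)
    have h := (Complex.continuous_ofReal.tendsto 0).comp hre
    rw [Complex.ofReal_zero] at h
    exact h.congr fun n => by simp only [Function.comp]; push_cast; ring
  have hcinv : Tendsto (fun n : ℕ => (c + (n:ℂ))⁻¹) atTop (nhds 0) := by
    rw [tendsto_zero_iff_norm_tendsto_zero]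
    have hb : Tendsto (fun n : ℕ => ((n:ℝ) - ‖c‖)⁻¹) atTop (nhds 0) :=
      tendsto_inv_atTop_zero.comp (tendsto_atTop_add_const_right atTop (-‖c‖) tendsto_natCast_atTop_atTop)
    apply squeeze_zero' (Eventually.of_forall fun n => norm_nonneg _) ?_ hb
    filter_upwards [eventually_gt_atTop ⌈‖c‖⌉₊] with n hn
    have hlt : ‖c‖ < (n:ℝ) := Nat.lt_of_ceil_lt hn
    have h1 : (n:ℝ) - ‖c‖ ≤ ‖c + (n:ℂ)‖ := by
      have h0 : ‖(n:ℂ)‖ - ‖(-c)‖ ≤ ‖(n:ℂ) - (-c)‖ := norm_sub_norm_le _ _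
      rw [norm_neg, sub_neg_eq_add, add_comm] at h0
      have hn2 : ‖(n:ℂ)‖ = (n:ℝ) := by simp
      linarith
    rw [norm_inv]
    exact inv_anti₀ (by linarith) h1
  have h1 : Tendsto (fun n : ℕ => (a + (n:ℂ))/((n:ℂ)+1)) atTop (nhds 1) := by
    have heq : (fun n : ℕ => (a + (n:ℂ))/((n:ℂ)+1)) = fun n : ℕ => 1 + (a - 1) * ((n:ℂ)+1)⁻¹ := by
      funext n
      have h4 : ((n:ℂ)+1) ≠ 0 := Nat.cast_add_one_ne_zero n
      field_simp
      ring
    rw [heq]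
    simpa using tendsto_const_nhds.add (tendsto_const_nhds.mul hinv)
  have h2 : Tendsto (fun n : ℕ => (b + (n:ℂ))/(c + (n:ℂ))) atTop (nhds 1) := by
    have heq : (fun n : ℕ => (b + (n:ℂ))/(c + (n:ℂ))) = fun n : ℕ => 1 + (b - c) * (c + (n:ℂ))⁻¹ := by
      funext n
      have h4 := cn_ne_zero hc n
      field_simp
      ring
    rw [heq]
    simpa using tendsto_const_nhds.add (tendsto_const_nhds.mul hcinv)
  have h3 : Tendsto (fun n : ℕ => (a + n) * (b + n) / ((c + n) * ((n:ℂ)+1))) atTop (nhds 1) := by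
    have heq : (fun n : ℕ => (a + n) * (b + n) / ((c + n) * ((n:ℂ)+1)))
        = fun n : ℕ => ((a + (n:ℂ))/((n:ℂ)+1)) * ((b + (n:ℂ))/(c + (n:ℂ))) := by
      funext n
      rw [div_mul_div_comm]
      ring_nf
    rw [heq]
    simpa using h1.mul h2
  simpa using h3.norm

lemma poch_ne_zero {c : ℂ} (hc : 0 < c.re) (n : ℕ) : (ascPochhammer ℂ n).eval c ≠ 0 := by
  induction n with
  | zero => simp
  | succ n ih =>
    rw [ascPochhammer_succ_eval]
    exact mul_ne_zero ih (cn_ne_zero hc n)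

lemma hypCoeff_succ (a b : ℂ) {c : ℂ} (hc : 0 < c.re) (n : ℕ) :
    hypCoeff a b c (n+1) = hypCoeff a b c n * ((a + n) * (b + n) / ((c + n) * ((n:ℂ)+1))) := by
  have h1 := poch_ne_zero hc n
  have h2 := cn_ne_zero hc n
  have h3 : ((n.factorial : ℂ)) ≠ 0 := Nat.cast_ne_zero.2 n.factorial_ne_zero
  have h4 : ((n:ℂ)+1) ≠ 0 := Nat.cast_add_one_ne_zero n
  unfold hypCoeff
  rw [ascPochhammer_succ_eval, ascPochhammer_succ_eval, ascPochhammer_succ_eval,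
    Nat.factorial_succ, Nat.cast_mul]
  field_simp
  push_cast
  ring

lemma summable_bound (a b : ℂ) {c : ℂ} (hc : 0 < c.re) :
    Summable (fun n : ℕ => ‖hypCoeff a b c n‖ * (1/2:ℝ)^n) := by
  apply summable_of_ratio_norm_eventually_le (r := 3/4) (by norm_num)
  filter_upwards [(ratio_tendsto a b hc).eventually_lt_const (by norm_num : (1:ℝ) < 3/2)] with n hn
  rw [Real.norm_of_nonneg (by positivity), Real.norm_of_nonneg (by positivity),
    hypCoeff_succ a b hc n, norm_mul, pow_succ]
  nlinarith [mul_le_mul_of_nonneg_left hn.le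
    (by positivity : (0:ℝ) ≤ ‖hypCoeff a b c n‖ * (1/2:ℝ)^n)]

lemma hyp_continuousOn (a b : ℂ) {c : ℂ} (hc : 0 < c.re) :
    ContinuousOn (fun z : ℂ => hyp a b c z) (Metric.closedBall 0 (1/2)) := by
  apply continuousOn_tsum (u := fun n => ‖hypCoeff a b c n‖ * (1/2:ℝ)^n)
    (fun n => ((continuous_const.mul (continuous_pow n)).continuousOn))
    (summable_bound a b hc)
  intro n z hz
  have hz' : ‖z‖ ≤ 1/2 := by simpa [Metric.mem_closedBall] using hz
  show ‖hypCoeff a b c n * z ^ n‖ ≤ _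
  rw [norm_mul, norm_pow]
  gcongr

lemma cpow_ofReal_continuousOn {w : ℂ} {s : Set ℝ} (h : ∀ t ∈ s, 0 < t) :
    ContinuousOn (fun t : ℝ => ((t:ℝ):ℂ) ^ w) s := by
  intro t ht
  apply ContinuousAt.continuousWithinAt
  exact (continuousAt_cpow_const (ofReal_mem_slitPlane.2 (h t ht))).comp
    Complex.continuous_ofReal.continuousAt

lemma hyp_comp_continuousOn (a b : ℂ) {c : ℂ} (hc : 0 < c.re) {g : ℝ → ℝ} {s : Set ℝ}
    (hg : Continuous g) (hmap : ∀ t ∈ s, |g t| ≤ 1/2) :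
    ContinuousOn (fun t : ℝ => hyp a b c ((g t : ℝ) : ℂ)) s := by
  apply (hyp_continuousOn a b hc).comp (Complex.continuous_ofReal.comp hg).continuousOn
  intro t ht
  simp only [Metric.mem_closedBall, Complex.dist_eq, sub_zero, Function.comp,
    Complex.norm_real, Real.norm_eq_abs]
  exact hmap t ht


lemma piece1 (a b : ℂ) {c : ℂ} (hc : 0 < c.re) (w v : ℂ) (hv : -1 < v.re) :
    IntegrableOn (fun t : ℝ => ((1 - t : ℝ):ℂ)^w * ((t:ℝ):ℂ)^v * hyp a b c ((t:ℝ):ℂ))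
      (Ioo 0 (1/2)) volume := by
  have hii : IntervalIntegrable (fun x : ℝ => ((x:ℝ):ℂ)^v) volume 0 (1/2) :=
    intervalIntegral.intervalIntegrable_cpow' hv
  have hcont : ContinuousOn (fun t : ℝ => ((1 - t : ℝ):ℂ)^w * hyp a b c ((t:ℝ):ℂ)) (uIcc (0:ℝ) (1/2)) := by
    rw [uIcc_of_le (by norm_num)]
    apply ContinuousOn.mul
    · have h := cpow_ofReal_continuousOn (w := w) (s := Icc (1/2:ℝ) 1)
        (fun t ht => by linarith [ht.1])
      exact h.comp (by continuity : Continuous (fun t : ℝ => 1 - t)).continuousOn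
        (fun t ht => ⟨by linarith [ht.2], by linarith [ht.1]⟩)
    · exact hyp_comp_continuousOn a b hc continuous_id
        (fun t ht => by rw [_root_.abs_of_nonneg ht.1]; exact ht.2)
  have h2 := hii.continuousOn_mul hcont
  rw [intervalIntegrable_iff_integrableOn_Ioc_of_le (by norm_num)] at h2
  exact (h2.mono_set Ioo_subset_Ioc_self).congr_fun (fun t _ => by ring) measurableSet_Ioo

lemma piece2 (a b : ℂ) {c : ℂ} (hc : 0 < c.re) (w v : ℂ) (hw : -1 < w.re) :
    IntegrableOn (fun t : ℝ => ((1 - t : ℝ):ℂ)^w * ((t:ℝ):ℂ)^v * hyp a b c ((1 - t : ℝ):ℂ))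
      (Ioo (1/2) 1) volume := by
  have base : IntervalIntegrable (fun x : ℝ => ((x:ℝ):ℂ)^w) volume 0 (1/2) :=
    intervalIntegral.intervalIntegrable_cpow' hw
  have h1 := (base.comp_sub_left 1).symm
  norm_num at h1
  have hcont : ContinuousOn (fun t : ℝ => ((t:ℝ):ℂ)^v * hyp a b c ((1 - t : ℝ):ℂ)) (uIcc (1/2:ℝ) 1) := by
    rw [uIcc_of_le (by norm_num)]
    apply ContinuousOn.mul
    · exact cpow_ofReal_continuousOn (fun t ht => by linarith [ht.1])
    · exact hyp_comp_continuousOn a b hc (by continuity)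
        (fun t ht => by rw [_root_.abs_of_nonneg (by linarith [ht.2])]; linarith [ht.1])
  have h2 := h1.mul_continuousOn hcont
  rw [intervalIntegrable_iff_integrableOn_Ioc_of_le (by norm_num)] at h2
  exact (h2.mono_set Ioo_subset_Ioc_self).congr_fun (fun t _ => by push_cast; ring)
    measurableSet_Ioo


/-- Convergence of the two pieces of the integral `I₂(C,C,C)` for the coupling of two
continuous series to a continuous series. -/
theorem integral_CCC_I2_integrable (s₁ s₂ s₁₂ p₁ p₂ : ℝ) :
    IntegrableOn (fun t : ℝ =>
        ((1 - t : ℝ) : ℂ) ^ (-(1 / 2 : ℂ) - I * (s₁₂ : ℂ) + I * (p₁ : ℂ) + I * (p₂ : ℂ)) *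
          ((t : ℝ) : ℂ) ^ (-(I * (p₂ : ℂ)) + I * (s₂ : ℂ) - 1 / 2) *
          hyp (1 / 2 - I * (s₁₂ : ℂ) + I * (s₁ : ℂ) + I * (s₂ : ℂ))
            (1 / 2 - I * (s₁₂ : ℂ) - I * (s₁ : ℂ) + I * (s₂ : ℂ))
            (1 + 2 * I * (s₂ : ℂ)) t)
      (Ioo 0 (1 / 2)) volume ∧
    IntegrableOn (fun t : ℝ =>
        ((1 - t : ℝ) : ℂ) ^ (I * (s₁₂ : ℂ) - 1 / 2 + I * (p₁ : ℂ) + I * (p₂ : ℂ)) *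
          ((t : ℝ) : ℂ) ^ (-(I * (p₂ : ℂ)) + I * (s₂ : ℂ) - 1 / 2) *
          hyp (1 / 2 + I * (s₁₂ : ℂ) - I * (s₁ : ℂ) + I * (s₂ : ℂ))
            (1 / 2 + I * (s₁₂ : ℂ) + I * (s₁ : ℂ) + I * (s₂ : ℂ))
            (1 + 2 * I * (s₁₂ : ℂ)) ((1 - t : ℝ) : ℂ))
      (Ioo (1 / 2) 1) volume := by
  constructor
  · exact piece1 _ _ (by simp) _ _ (by simp; norm_num)
  · exact piece2 _ _ (by simp) _ _ (by simp; norm_num)
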